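/- arXiv:2511.09196 — 3 statements merged into one kernel-verified Lean document; each statement's English description precedes it below -/
import Mathlib

section
/- If λ = μ + iω (ω ≠ 0) is a complex root of the Euler–Lotka equation ∫₀^∞ e^{-λa} β(a)𝓕(a) da = 1, where β𝓕 is nonnegative, integrable, and not supported on a lattice (in particular not a.e. zero), then the real part μ is strictly less than the unique real root r, i.e., all complex roots have real part smaller than the Malthusian parameter. -/
open MeasureTheory Set Filter Real

/-- Any complex root `μ + iω` (`ω ≠ 0`) of the Euler–Lotka equation
`∫₀^∞ e^{-λa} β(a)𝓕(a) da = 1`, for a nonnegative integrable kernel `β𝓕` that is not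
a.e. zero and not supported on a lattice, has real part strictly smaller than the unique
real root `r` (the Malthusian parameter). -/
theorem complex_roots_below_malthusian
    (β 𝓕 : ℝ → ℝ)
    (hβ_nonneg : ∀ a, 0 ≤ a → 0 ≤ β a)
    (h𝓕_meas : Measurable 𝓕)
    (h𝓕_range : ∀ a, 0 ≤ a → 0 ≤ 𝓕 a ∧ 𝓕 a ≤ 1)
    (hA_int : IntegrableOn (fun a => β a * 𝓕 a) (Ioi 0))
    (hA_ne_zero : ¬ (fun a => β a * 𝓕 a) =ᵐ[volume.restrict (Ioi (0:ℝ))] 0)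
    (hA_not_lattice : ¬ ∃ δ : ℝ, 0 < δ ∧
      ∀ᵐ a ∂(volume.restrict (Ioi (0:ℝ))), β a * 𝓕 a ≠ 0 → ∃ k : ℤ, a = k * δ)
    (r : ℝ)
    (hr_int : IntegrableOn (fun a => Real.exp (-r * a) * (β a * 𝓕 a)) (Ioi 0))
    (hr_root : ∫ a in Ioi (0:ℝ), Real.exp (-r * a) * (β a * 𝓕 a) = 1)
    (μ ω : ℝ) (hω : ω ≠ 0)
    (hμ_int : IntegrableOn (fun a => Real.exp (-μ * a) * (β a * 𝓕 a)) (Ioi 0))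
    (h_root : ∫ a in Ioi (0:ℝ),
        Complex.exp (-(μ + ω * Complex.I) * a) * ((β a * 𝓕 a : ℝ) : ℂ) = 1) :
    μ < r := by
  by_contra hlt
  push_neg at hlt
  have hA_nonneg : ∀ a ∈ Ioi (0:ℝ), 0 ≤ β a * 𝓕 a := fun a ha =>
    mul_nonneg (hβ_nonneg a ha.out.le) ((h𝓕_range a ha.out.le).1)
  -- F(μ) ≤ 1
  have hFμ_le : ∫ a in Ioi (0:ℝ), Real.exp (-μ * a) * (β a * 𝓕 a) ≤ 1 := by
    rw [← hr_root]
    refine setIntegral_mono_on hμ_int hr_int measurableSet_Ioi ?_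
    intro a ha
    refine mul_le_mul_of_nonneg_right ?_ (hA_nonneg a ha)
    exact Real.exp_le_exp.2 (by nlinarith [ha.out])
  -- integrability of the complex integrand
  have haesm : AEStronglyMeasurable (fun a : ℝ => ((β a * 𝓕 a : ℝ) : ℂ))
      (volume.restrict (Ioi (0:ℝ))) :=
    Complex.continuous_ofReal.comp_aestronglyMeasurable hA_int.aestronglyMeasurable
  have hcexp : Continuous fun a : ℝ => Complex.exp (-(μ + ω * Complex.I) * a) :=
    Complex.continuous_exp.comp (by continuity)
  have hint_c : IntegrableOn
      (fun a : ℝ => Complex.exp (-(μ + ω * Complex.I) * a) * ((β a * 𝓕 a : ℝ) : ℂ))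
      (Ioi 0) := by
    refine Integrable.mono' hμ_int (hcexp.aestronglyMeasurable.mul haesm) ?_
    filter_upwards [ae_restrict_mem measurableSet_Ioi] with a ha
    rw [norm_mul, Complex.norm_exp]
    have hre : (-(↑μ + ↑ω * Complex.I) * (a:ℂ)).re = -μ * a := by
      simp [Complex.mul_re]
    rw [hre, Complex.norm_real, Real.norm_eq_abs, abs_of_nonneg (hA_nonneg a ha)]
  -- pointwise real part
  have hpt : ∀ a : ℝ, (Complex.exp (-(μ + ω * Complex.I) * a) * ((β a * 𝓕 a : ℝ) : ℂ)).re
      = Real.exp (-μ * a) * Real.cos (ω * a) * (β a * 𝓕 a) := by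
    intro a
    have h1 : (-(↑μ + ↑ω * Complex.I) * (a:ℂ)) = Complex.mk (-μ * a) (-ω * a) := by
      apply Complex.ext <;> simp [Complex.mul_re, Complex.mul_im] <;> ring
    rw [h1, Complex.mul_re]
    simp [Complex.exp_re, Real.cos_neg]
  -- real part of the root equation
  have hre_root : ∫ a in Ioi (0:ℝ),
      Real.exp (-μ * a) * Real.cos (ω * a) * (β a * 𝓕 a) = 1 := by
    have h2 := integral_re hint_c
    rw [h_root] at h2
    simp only [RCLike.re_to_complex, Complex.one_re] at h2
    rw [← h2]
    exact integral_congr_ae (Filter.Eventually.of_forall fun a => (hpt a).symm)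
  -- the cosine-weighted integrand is integrable
  have hint_cos : IntegrableOn
      (fun a => Real.exp (-μ * a) * Real.cos (ω * a) * (β a * 𝓕 a)) (Ioi 0) := by
    refine Integrable.mono' hμ_int ?_ ?_
    · exact ((Real.continuous_exp.comp (by continuity)).mul
        (Real.continuous_cos.comp (by continuity))).aestronglyMeasurable.mul
        hA_int.aestronglyMeasurable
    · filter_upwards [ae_restrict_mem measurableSet_Ioi] with a ha
      rw [Real.norm_eq_abs, abs_mul, abs_mul, abs_of_nonneg (Real.exp_pos _).le,
        abs_of_nonneg (hA_nonneg a ha)]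
      have h3 : |Real.cos (ω * a)| ≤ 1 := Real.abs_cos_le_one _
      exact mul_le_mul_of_nonneg_right
        (mul_le_of_le_one_right (Real.exp_pos _).le h3) (hA_nonneg a ha)
  -- nonnegative gap function
  set g : ℝ → ℝ := fun a => Real.exp (-μ * a) * (1 - Real.cos (ω * a)) * (β a * 𝓕 a) with hg
  have hg_nonneg : ∀ᵐ a ∂(volume.restrict (Ioi (0:ℝ))), 0 ≤ g a := by
    filter_upwards [ae_restrict_mem measurableSet_Ioi] with a ha
    have h4 : Real.cos (ω * a) ≤ 1 := Real.cos_le_one _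
    exact mul_nonneg (mul_nonneg (Real.exp_pos _).le (by linarith)) (hA_nonneg a ha)
  have hg_int : IntegrableOn g (Ioi 0) := by
    have : g = (fun a => Real.exp (-μ * a) * (β a * 𝓕 a))
        - fun a => Real.exp (-μ * a) * Real.cos (ω * a) * (β a * 𝓕 a) := by
      funext a; simp [hg]; ring
    rw [this]; exact hμ_int.sub hint_cos
  have hg_integral : ∫ a in Ioi (0:ℝ), g a =
      (∫ a in Ioi (0:ℝ), Real.exp (-μ * a) * (β a * 𝓕 a)) -
      ∫ a in Ioi (0:ℝ), Real.exp (-μ * a) * Real.cos (ω * a) * (β a * 𝓕 a) := by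
    rw [← integral_sub hμ_int hint_cos]
    congr 1; funext a; simp [hg]; ring
  have hg_zero : ∫ a in Ioi (0:ℝ), g a = 0 := by
    have h5 : 0 ≤ ∫ a in Ioi (0:ℝ), g a := integral_nonneg_of_ae hg_nonneg
    rw [hg_integral, hre_root]
    rw [hg_integral, hre_root] at h5
    linarith
  have hg_ae : g =ᵐ[volume.restrict (Ioi (0:ℝ))] 0 :=
    (integral_eq_zero_iff_of_nonneg_ae hg_nonneg hg_int).1 hg_zero
  -- lattice contradiction
  refine hA_not_lattice ⟨2 * π / |ω|, by positivity, ?_⟩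
  filter_upwards [hg_ae, ae_restrict_mem measurableSet_Ioi] with a hga ha hAa
  have hexp : Real.exp (-μ * a) ≠ 0 := (Real.exp_pos _).ne'
  have hcos : Real.cos (ω * a) = 1 := by
    have : Real.exp (-μ * a) * (1 - Real.cos (ω * a)) * (β a * 𝓕 a) = 0 := hga
    rcases mul_eq_zero.1 this with h | h
    · rcases mul_eq_zero.1 h with h' | h'
      · exact absurd h' hexp
      · linarith
    · exact absurd h hAa
  obtain ⟨n, hn⟩ := (Real.cos_eq_one_iff _).1 hcos
  rcases lt_or_gt_of_ne hω with hneg | hpos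
  · refine ⟨-n, ?_⟩
    rw [abs_of_neg hneg]
    push_cast
    field_simp
    nlinarith
  · refine ⟨n, ?_⟩
    rw [abs_of_pos hpos]
    field_simp
    nlinarith
end

section
/- Let j, τ, σ > 0 with j = τ²/σ², and let n = max(⌈j⌉, 2). Define μ and ν by 1/ν = (τ/n)(1 + √(n(n−j)/(2j))) and 1/μ = (τ/n)(1 − √(n(n−j)/(2j))), and let Y be the sum of n independent exponential random variables, n−2 of them with rate λ = n/τ and the remaining two with rates ν and μ. Then E[Y] = τ and Var(Y) = σ², i.e., Y matches the first two moments of a gamma random variable with mean τ and variance σ². -/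
open MeasureTheory ProbabilityTheory Real

section AuxMoments
open MeasureTheory ProbabilityTheory Real Set Filter Asymptotics

lemma expMeasure_pow_aux {r : ℝ} (hr : 0 < r) (k : ℕ) :
    Integrable (fun x : ℝ => x ^ k) (expMeasure r) ∧
      ∫ x, x ^ k ∂(expMeasure r) = (Nat.factorial k) / r ^ k := by
  have hpdf : ∀ x : ℝ, gammaPDFReal 1 r x = if 0 ≤ x then r * Real.exp (-(r * x)) else 0 := by
    intro x
    simp [gammaPDFReal, Real.Gamma_one, Real.rpow_one, sub_self, Real.rpow_zero]
  have hind : (fun x : ℝ => gammaPDFReal 1 r x * x ^ k)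
      = Set.indicator (Set.Ici 0) (fun x : ℝ => r * Real.exp (-(r * x)) * x ^ k) := by
    funext x
    rw [Set.indicator_apply, hpdf x]
    by_cases h : (0:ℝ) ≤ x <;> simp [h, Set.mem_Ici]
  have hio : IntegrableOn (fun x : ℝ => r * Real.exp (-(r * x)) * x ^ k) (Set.Ici 0) := by
    rw [integrableOn_Ici_iff_integrableOn_Ioi]
    have h1 : IntegrableOn (fun t : ℝ => t ^ k * Real.exp (-(r * t))) (Set.Ioi 0) := by
      apply integrable_of_isBigO_exp_neg (half_pos hr)
      · exact ((continuous_pow k).mul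
          ((continuous_const.mul continuous_id).neg.rexp)).continuousOn
      · have h1 : (fun t : ℝ => t ^ (k:ℝ) * Real.exp (-(r/2) * t)) =O[atTop]
            (fun _ : ℝ => (1:ℝ)) :=
          (tendsto_rpow_mul_exp_neg_mul_atTop_nhds_zero k (r/2) (half_pos hr)).isBigO_one ℝ
        have h2 := h1.mul (isBigO_refl (fun x : ℝ => Real.exp (-(r/2) * x)) atTop)
        refine h2.congr' ?_ ?_
        · filter_upwards with t
          rw [Real.rpow_natCast, mul_assoc, ← Real.exp_add]
          congr 2
          ring
        · filter_upwards with t using one_mul _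
    exact MeasureTheory.IntegrableOn.congr_fun (h1.const_mul r) (fun x _ => by ring) measurableSet_Ioi
  have hmeas : Measurable fun x : ℝ => (gammaPDFReal 1 r x).toNNReal :=
    (measurable_gammaPDFReal 1 r).real_toNNReal
  have hrepr : expMeasure r
      = (volume : Measure ℝ).withDensity (fun x => ((gammaPDFReal 1 r x).toNNReal : ENNReal)) := rfl
  constructor
  · rw [hrepr, integrable_withDensity_iff hmeas.coe_nnreal_ennreal
      (Filter.Eventually.of_forall fun x => ENNReal.coe_lt_top)]
    have h3 : (fun x : ℝ => x ^ k * (((gammaPDFReal 1 r x).toNNReal : ENNReal)).toReal)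
        = Set.indicator (Set.Ici 0) (fun x : ℝ => r * Real.exp (-(r * x)) * x ^ k) := by
      funext x
      rw [ENNReal.coe_toReal, Real.coe_toNNReal _ (gammaPDFReal_nonneg zero_lt_one hr x),
        mul_comm]
      exact congrFun hind x
    rw [h3, integrable_indicator_iff measurableSet_Ici]
    exact hio
  · rw [hrepr, integral_withDensity_eq_integral_smul hmeas]
    have h3 : (fun x : ℝ => (gammaPDFReal 1 r x).toNNReal • x ^ k)
        = Set.indicator (Set.Ici 0) (fun x : ℝ => r * Real.exp (-(r * x)) * x ^ k) := by
      funext x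
      rw [NNReal.smul_def, Real.coe_toNNReal _ (gammaPDFReal_nonneg zero_lt_one hr x),
        smul_eq_mul]
      exact congrFun hind x
    rw [h3, integral_indicator measurableSet_Ici, integral_Ici_eq_integral_Ioi]
    have h1 : ∫ x in Set.Ioi (0:ℝ), r * Real.exp (-(r * x)) * x ^ k
        = ∫ x in Set.Ioi (0:ℝ), r * (x ^ (((k:ℝ)+1) - 1) * Real.exp (-(r * x))) := by
      refine setIntegral_congr_fun measurableSet_Ioi fun x hx => ?_
      rw [add_sub_cancel_right, Real.rpow_natCast]
      ring
    rw [h1, integral_const_mul, integral_rpow_mul_exp_neg_mul_Ioi (by positivity) hr,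
      Real.Gamma_nat_eq_factorial,
      show ((k:ℝ)+1) = ((k+1 : ℕ) : ℝ) by push_cast; ring, Real.rpow_natCast]
    rw [one_div_pow, pow_succ]
    field_simp

end AuxMoments

open MeasureTheory ProbabilityTheory Real in
lemma expMeasure_integrable_id' {r : ℝ} (hr : 0 < r) :
    Integrable (fun x : ℝ => x) (expMeasure r) := by
  have h := (expMeasure_pow_aux hr 1).1
  simpa using h

open MeasureTheory ProbabilityTheory Real in
lemma expMeasure_integrable_sq' {r : ℝ} (hr : 0 < r) :
    Integrable (fun x : ℝ => x ^ 2) (expMeasure r) :=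
  (expMeasure_pow_aux hr 2).1

open MeasureTheory ProbabilityTheory Real in
lemma expMeasure_integral_id' {r : ℝ} (hr : 0 < r) :
    ∫ x, x ∂(expMeasure r) = 1 / r := by
  have h := (expMeasure_pow_aux hr 1).2
  simpa using h

open MeasureTheory ProbabilityTheory Real in
lemma expMeasure_integral_sq' {r : ℝ} (hr : 0 < r) :
    ∫ x, x ^ 2 ∂(expMeasure r) = 2 / r ^ 2 := by
  have h := (expMeasure_pow_aux hr 2).2
  norm_num [Nat.factorial] at h
  exact h

/-- Theorem 3.1 of Cassidy et al. 2022: the hypoexponential random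
variable `Y`, the sum of `n = max ⌈j⌉ 2` independent exponentials, `n - 2` of rate
`n/τ` and the last two of rates `ν` and `μ` as specified, has mean `τ` and variance
`σ² = τ²/j`, matching the first two moments of a gamma with mean `τ` and variance
`σ²`. -/
theorem hypoexponential_moment_matching
    (j τ σ : ℝ) (hj : 0 < j) (hτ : 0 < τ) (hσ : 0 < σ)
    (hshape : j = τ ^ 2 / σ ^ 2)
    (n : ℕ) (hn : (n : ℤ) = max ⌈j⌉ 2)
    (hjn : j ≤ n)
    (ν μ : ℝ)
    (hν : 1 / ν = (τ / n) * (1 + Real.sqrt (n * (n - j) / (2 * j))))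
    (hμ : 1 / μ = (τ / n) * (1 - Real.sqrt (n * (n - j) / (2 * j))))
    (hμ_pos : 0 < (τ / n) * (1 - Real.sqrt (n * (n - j) / (2 * j))))
    (rates : Fin n → ℝ)
    (hrates : ∀ i : Fin n,
      rates i = if (i : ℕ) < n - 2 then n / τ
        else if (i : ℕ) = n - 2 then ν else μ)
    {Ω : Type*} [MeasurableSpace Ω] (P : Measure Ω) [IsProbabilityMeasure P]
    (X : Fin n → Ω → ℝ)
    (hX_meas : ∀ i, Measurable (X i))
    (hX_indep : iIndepFun X P)
    (hX_law : ∀ i, P.map (X i) = expMeasure (rates i))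
    (Y : Ω → ℝ) (hY : Y = fun ω => ∑ i : Fin n, X i ω) :
    (∫ ω, Y ω ∂P) = τ ∧ variance Y P = σ ^ 2 := by
  set s : ℝ := Real.sqrt (n * (n - j) / (2 * j)) with hs_def
  have hn2 : 2 ≤ n := by
    have h2 : (2:ℤ) ≤ (n:ℤ) := hn ▸ le_max_right _ _
    exact_mod_cast h2
  have hnR : (0:ℝ) < n := by
    have : 0 < n := by omega
    exact_mod_cast this
  have hs_nonneg : 0 ≤ s := Real.sqrt_nonneg _
  -- positivity of the rates
  have hν_pos : 0 < ν := by
    have h1 : 0 < 1 / ν := by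
      rw [hν]
      have : (0:ℝ) < 1 + s := by linarith
      positivity
    exact one_div_pos.mp h1
  have hμ_pos' : 0 < μ := one_div_pos.mp (hμ ▸ hμ_pos)
  have hpos : ∀ i, 0 < rates i := by
    intro i
    rw [hrates i]
    split_ifs
    · positivity
    · exact hν_pos
    · exact hμ_pos'
  -- moments of each X i
  have hInt : ∀ i, Integrable (X i) P := by
    intro i
    have h := (integrable_map_measure (μ := P) (f := X i) (g := fun x : ℝ => x)
      aestronglyMeasurable_id (hX_meas i).aemeasurable).mp
    rw [hX_law i] at h
    exact h (expMeasure_integrable_id' (hpos i))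
  have hmean_i : ∀ i, ∫ ω, X i ω ∂P = 1 / rates i := by
    intro i
    have h := integral_map (μ := P) (hX_meas i).aemeasurable
      (f := fun x : ℝ => x) aestronglyMeasurable_id
    rw [← h, hX_law i, expMeasure_integral_id' (hpos i)]
  have hsq_i : ∀ i, ∫ ω, (X i ω) ^ 2 ∂P = 2 / rates i ^ 2 := by
    intro i
    have h := integral_map (μ := P) (hX_meas i).aemeasurable
      (f := fun x : ℝ => x ^ 2) (measurable_id.pow_const 2).aestronglyMeasurable
    rw [← h, hX_law i, expMeasure_integral_sq' (hpos i)]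
  have hMem : ∀ i, MeasureTheory.MemLp (X i) 2 P := by
    intro i
    have h2 : MeasureTheory.MemLp id 2 (P.map (X i)) := by
      rw [hX_law i]
      exact (memLp_two_iff_integrable_sq aestronglyMeasurable_id).mpr
        (expMeasure_integrable_sq' (hpos i))
    exact (memLp_map_measure_iff (μ := P) (g := id) aestronglyMeasurable_id (hX_meas i).aemeasurable).mp h2
  have hvar_i : ∀ i, variance (X i) P = 1 / rates i ^ 2 := by
    intro i
    rw [variance_eq_sub (hMem i)]
    simp only [Pi.pow_apply]
    rw [hsq_i i, hmean_i i]
    have hri := (hpos i).ne'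
    field_simp
    ring
  -- the generic sum over the rates
  obtain ⟨m, hm⟩ : ∃ m, n = m + 2 := ⟨n - 2, by omega⟩
  have hsum : ∀ f : ℝ → ℝ, ∑ i : Fin n, f (rates i)
      = (m : ℝ) * f ((n:ℝ)/τ) + f ν + f μ := by
    intro f
    have h1 : ∀ i : Fin n, f (rates i)
        = (fun p : ℕ => f (if p < n - 2 then (n:ℝ)/τ else if p = n - 2 then ν else μ))
          (i : ℕ) := by
      intro i; rw [hrates i]
    rw [Finset.sum_congr rfl fun i _ => h1 i]
    rw [Fin.sum_univ_eq_sum_range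
      (fun p : ℕ => f (if p < n - 2 then (n:ℝ)/τ else if p = n - 2 then ν else μ)) n]
    have e2 : n - 2 = m := by omega
    simp only [e2]
    rw [show Finset.range n = Finset.range (m + 2) from by rw [hm],
      Finset.sum_range_succ, Finset.sum_range_succ]
    rw [if_neg (lt_irrefl m), if_pos rfl, if_neg (by omega : ¬ (m + 1 < m)),
      if_neg (by omega : m + 1 ≠ m)]
    have hc : ∀ x ∈ Finset.range m,
        f (if x < m then (↑n:ℝ)/τ else if x = m then ν else μ) = f ((↑n:ℝ)/τ) :=
      fun x hx => by rw [if_pos (Finset.mem_range.mp hx)]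
    rw [Finset.sum_congr rfl hc, Finset.sum_const, Finset.card_range, nsmul_eq_mul]
  have hmR : (m:ℝ) = (n:ℝ) - 2 := by
    rw [hm]; push_cast; ring
  constructor
  · -- the mean
    rw [hY, integral_finset_sum Finset.univ (fun i _ => hInt i),
      Finset.sum_congr rfl (fun i _ => hmean_i i)]
    have h := hsum (fun x => 1 / x)
    rw [h, hν, hμ, one_div_div]
    have hτ' := hτ.ne'
    have hn' := hnR.ne'
    field_simp
    linear_combination hmR
  · -- the variance
    have hYs : Y = ∑ i, X i := by
      rw [hY]; funext ω; rw [Finset.sum_apply]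
    rw [hYs, ProbabilityTheory.IndepFun.variance_sum (fun i _ => hMem i)
      (fun i _ j _ hij => hX_indep.indepFun hij),
      Finset.sum_congr rfl (fun i _ => hvar_i i)]
    have h := hsum (fun x => 1 / x ^ 2)
    rw [h]
    have hν2 : 1 / ν ^ 2 = ((τ / n) * (1 + s)) ^ 2 := by rw [← one_div_pow, hν]
    have hμ2 : 1 / μ ^ 2 = ((τ / n) * (1 - s)) ^ 2 := by rw [← one_div_pow, hμ]
    have hrate2 : 1 / ((n:ℝ)/τ) ^ 2 = (τ / n) ^ 2 := by rw [← one_div_pow, one_div_div]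
    rw [hν2, hμ2, hrate2]
    have hσ2 : σ ^ 2 = τ ^ 2 / j := by
      rw [hshape]
      field_simp
    rw [hσ2]
    have hs2 : s ^ 2 = (n:ℝ) * ((n:ℝ) - j) / (2 * j) := by
      rw [hs_def]
      exact Real.sq_sqrt (div_nonneg (mul_nonneg hnR.le (by linarith)) (by linarith))
    have hexp : ((m:ℝ) * (τ/(n:ℝ))^2 + (τ/(n:ℝ)*(1+s))^2 + (τ/(n:ℝ)*(1-s))^2 : ℝ)
        = (m:ℝ) * (τ/(n:ℝ))^2 + (τ/(n:ℝ))^2*2 + (τ/(n:ℝ))^2*2*(s^2) := by ring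
    rw [hexp, hs2, hmR]
    have hn' := hnR.ne'
    have hj' := hj.ne'
    field_simp
    ring
end

section
/- Let f be bounded continuous, β(a) = β₀ e^{−k_d a}, and define L_n(t) = ∫₀^∞ f(t−a) β(a) g_b^n(a) da with g_b^n the Erlang density. Then L₁'(t) = β₀ b f(t) − (b + k_d) L₁(t) and, for n ≥ 2, L_n'(t) = b(L_{n−1}(t) − L_n(t)) − k_d L_n(t). -/
open MeasureTheory Set Real

namespace LCTaux

noncomputable def Gm (c : ℝ) (f : ℝ → ℝ) (m : ℕ) (t : ℝ) : ℝ :=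
  ∫ s in Iic t, f s * s ^ m * Real.exp (c * s)

noncomputable def P (c : ℝ) (f : ℝ → ℝ) (n : ℕ) (t : ℝ) : ℝ :=
  ∫ s in Iic t, f s * (t - s) ^ n * Real.exp (c * s)

noncomputable def Q (c : ℝ) (f : ℝ → ℝ) (n : ℕ) (t : ℝ) : ℝ :=
  ∑ m ∈ Finset.range (n + 1),
    ((-1 : ℝ) ^ (m + n) * (n.choose m : ℝ) * t ^ m) * Gm c f (n - m) t

lemma integrableOn_abs_pow_mul_exp {c : ℝ} (hc : 0 < c) (m : ℕ) (t : ℝ) :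
    IntegrableOn (fun s => |s| ^ m * Real.exp (c * s)) (Iic t) := by
  have hemb : MeasurableEmbedding fun x : ℝ => -x := (Homeomorph.neg ℝ).measurableEmbedding
  rw [← Measure.map_neg_eq_self (volume : Measure ℝ), hemb.integrableOn_map_iff]
  have hIoi : IntegrableOn (fun x : ℝ => |x| ^ m * Real.exp (c * -x)) (Ioi 0) := by
    have h := integrableOn_rpow_mul_exp_neg_mul_rpow (p := 1) (s := (m : ℝ)) (b := c)
      (by exact neg_one_lt_zero.trans_le (Nat.cast_nonneg m)) one_pos hc
    refine h.congr_fun (fun x hx => ?_) measurableSet_Ioi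
    simp only [Real.rpow_one, pow_one, Real.rpow_natCast, abs_of_pos (show (0:ℝ) < x from hx)]; ring_nf
  have hIcc : IntegrableOn (fun x : ℝ => |x| ^ m * Real.exp (c * -x)) (Icc (-t) 0) :=
    (Continuous.integrableOn_Icc (by continuity))
  have hU : IntegrableOn (fun x : ℝ => |x| ^ m * Real.exp (c * -x)) (Icc (-t) 0 ∪ Ioi 0) :=
    hIcc.union hIoi
  have hsub : (fun x : ℝ => -x) ⁻¹' Iic t ⊆ Icc (-t) 0 ∪ Ioi 0 := by
    intro x hx
    simp only [mem_preimage, mem_Iic, neg_le] at hx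
    rcases le_or_gt x 0 with h | h
    · exact Or.inl ⟨hx, h⟩
    · exact Or.inr h
  refine ((hU.mono_set hsub).congr_fun (fun x _ => ?_) ?_)
  · simp [Function.comp, abs_neg]
  · exact hemb.measurable measurableSet_Iic

variable {c : ℝ} {f : ℝ → ℝ} {M : ℝ}

lemma integrand_cont (hf : Continuous f) (m : ℕ) :
    Continuous fun s => f s * s ^ m * Real.exp (c * s) := by
  fun_prop

lemma integrand_integrableOn (hc : 0 < c) (hf : Continuous f) (hM : ∀ x, |f x| ≤ M)
    (m : ℕ) (t : ℝ) : IntegrableOn (fun s => f s * s ^ m * Real.exp (c * s)) (Iic t) := by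
  refine Integrable.mono' ((integrableOn_abs_pow_mul_exp hc m t).const_mul M)
    ((integrand_cont hf m).aestronglyMeasurable.restrict) ?_
  filter_upwards with s
  have h1 : |f s| ≤ M := hM s
  have hnorm : ‖f s * s ^ m * Real.exp (c * s)‖ = |f s| * (|s| ^ m * Real.exp (c * s)) := by
    rw [norm_eq_abs, abs_mul, abs_mul, abs_pow, Real.abs_exp, mul_assoc]
  rw [hnorm]
  exact mul_le_mul_of_nonneg_right h1 (by positivity)

lemma hasDerivAt_Gm (hc : 0 < c) (hf : Continuous f) (hM : ∀ x, |f x| ≤ M) (m : ℕ) (t : ℝ) :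
    HasDerivAt (Gm c f m) (f t * t ^ m * Real.exp (c * t)) t := by
  have hcont := integrand_cont (c := c) hf m
  have key : Gm c f m = fun u : ℝ =>
      Gm c f m 0 + ∫ s in (0:ℝ)..u, f s * s ^ m * Real.exp (c * s) := by
    funext u
    have h := intervalIntegral.integral_Iic_sub_Iic (integrand_integrableOn hc hf hM m 0)
      (integrand_integrableOn hc hf hM m u)
    simp only [Gm]
    linarith [h]
  rw [key]
  exact (intervalIntegral.integral_hasDerivAt_right (hcont.intervalIntegrable _ _)
    (hcont.stronglyMeasurableAtFilter _ _) hcont.continuousAt).const_add _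

lemma P_eq_Q (hc : 0 < c) (hf : Continuous f) (hM : ∀ x, |f x| ≤ M) (n : ℕ) (t : ℝ) :
    P c f n t = Q c f n t := by
  have hpt : ∀ s : ℝ, f s * (t - s) ^ n * Real.exp (c * s)
      = ∑ m ∈ Finset.range (n + 1),
        ((-1 : ℝ) ^ (m + n) * (n.choose m : ℝ) * t ^ m) *
          (f s * s ^ (n - m) * Real.exp (c * s)) := by
    intro s
    rw [sub_pow, Finset.mul_sum, Finset.sum_mul]
    refine Finset.sum_congr rfl fun m hm => by ring
  simp only [P, hpt]
  rw [integral_finset_sum]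
  · exact Finset.sum_congr rfl fun m hm => integral_const_mul _ _
  · intro m hm
    exact (integrand_integrableOn hc hf hM (n - m) t).const_mul _

lemma hasDerivAt_Q (hc : 0 < c) (hf : Continuous f) (hM : ∀ x, |f x| ≤ M)
    (n : ℕ) (hn : 1 ≤ n) (t : ℝ) :
    HasDerivAt (Q c f n) ((n : ℝ) * Q c f (n - 1) t) t := by
  have hterm : ∀ m ∈ Finset.range (n + 1),
      HasDerivAt (fun u : ℝ => ((-1 : ℝ) ^ (m + n) * (n.choose m : ℝ)) * (u ^ m * Gm c f (n - m) u))
        (((-1 : ℝ) ^ (m + n) * (n.choose m : ℝ)) *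
          ((m : ℝ) * t ^ (m - 1) * Gm c f (n - m) t +
            t ^ m * (f t * t ^ (n - m) * Real.exp (c * t)))) t := by
    intro m _
    exact ((hasDerivAt_pow m t).mul (hasDerivAt_Gm hc hf hM (n - m) t)).const_mul _
  have hsum := HasDerivAt.sum hterm
  have hfun : Q c f n = fun u : ℝ => ∑ m ∈ Finset.range (n + 1),
      ((-1 : ℝ) ^ (m + n) * (n.choose m : ℝ)) * (u ^ m * Gm c f (n - m) u) := by
    funext u
    exact Finset.sum_congr rfl fun m _ => by ring
  rw [hfun]
  rw [Finset.sum_fn] at hsum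
  refine hsum.congr_deriv (Eq.symm ?_)
  -- value equality
  have hsplit : ∀ m ∈ Finset.range (n + 1),
      ((-1 : ℝ) ^ (m + n) * (n.choose m : ℝ)) *
        ((m : ℝ) * t ^ (m - 1) * Gm c f (n - m) t +
          t ^ m * (f t * t ^ (n - m) * Real.exp (c * t)))
      = ((-1 : ℝ) ^ (m + n) * (n.choose m : ℝ)) * ((m : ℝ) * t ^ (m - 1) * Gm c f (n - m) t)
        + ((-1 : ℝ) ^ (m + n) * (n.choose m : ℝ)) *
            (t ^ m * (f t * t ^ (n - m) * Real.exp (c * t))) := fun m _ => by ring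
  rw [Finset.sum_congr rfl hsplit, Finset.sum_add_distrib]
  have halt : ∑ m ∈ Finset.range (n + 1), ((-1 : ℝ) ^ m * (n.choose m : ℝ)) = 0 := by
    have h := Int.alternating_sum_range_choose_of_ne (n := n) (by omega)
    calc ∑ m ∈ Finset.range (n + 1), ((-1 : ℝ) ^ m * (n.choose m : ℝ))
        = ((∑ m ∈ Finset.range (n + 1), ((-1) ^ m * (n.choose m : ℤ)) : ℤ) : ℝ) := by
          push_cast; ring
      _ = 0 := by rw [h]; norm_num
  have hS2 : ∑ m ∈ Finset.range (n + 1),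
      ((-1 : ℝ) ^ (m + n) * (n.choose m : ℝ)) *
        (t ^ m * (f t * t ^ (n - m) * Real.exp (c * t))) = 0 := by
    have hcongr : ∀ m ∈ Finset.range (n + 1),
        ((-1 : ℝ) ^ (m + n) * (n.choose m : ℝ)) *
          (t ^ m * (f t * t ^ (n - m) * Real.exp (c * t)))
        = ((-1 : ℝ) ^ n * t ^ n * f t * Real.exp (c * t)) *
            ((-1 : ℝ) ^ m * (n.choose m : ℝ)) := by
      intro m hm
      have hmn : m ≤ n := Nat.lt_succ_iff.mp (Finset.mem_range.mp hm)
      have ht : t ^ m * t ^ (n - m) = t ^ n := by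
        rw [← pow_add]; congr 1; omega
      rw [pow_add, ← ht]; ring
    rw [Finset.sum_congr rfl hcongr, ← Finset.mul_sum, halt, mul_zero]
  rw [hS2, add_zero]
  -- first sum
  rw [Finset.sum_range_succ']
  have hzero : ((-1 : ℝ) ^ (0 + n) * (n.choose 0 : ℝ)) *
      ((0 : ℕ) * t ^ (0 - 1) * Gm c f (n - 0) t) = 0 := by
    simp
  rw [hzero, add_zero]
  have hrange : n - 1 + 1 = n := by omega
  simp only [Q, hrange]
  rw [Finset.mul_sum]
  refine Finset.sum_congr rfl fun i hi => ?_
  have hi' : i < n := Finset.mem_range.mp hi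
  have hidx : n - (i + 1) = n - 1 - i := by omega
  have hsign : (-1 : ℝ) ^ (i + 1 + n) = (-1 : ℝ) ^ (i + (n - 1)) := by
    rw [show i + 1 + n = i + (n - 1) + 2 by omega, pow_add]
    norm_num
  have hchoose : (n.choose (i + 1) : ℝ) * ((i + 1 : ℕ) : ℝ) = (n : ℝ) * ((n - 1).choose i : ℝ) := by
    have h := Nat.add_one_mul_choose_eq (n - 1) i
    rw [show n - 1 + 1 = n by omega] at h
    exact_mod_cast h.symm
  rw [hidx, hsign]
  simp only [Nat.add_sub_cancel]
  linear_combination (-(1 : ℝ)) * ((-1 : ℝ) ^ (i + (n - 1)) * t ^ i * Gm c f (n - 1 - i) t) * hchoose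

lemma hasDerivAt_P (hc : 0 < c) (hf : Continuous f) (hM : ∀ x, |f x| ≤ M)
    (n : ℕ) (hn : 1 ≤ n) (t : ℝ) :
    HasDerivAt (P c f n) ((n : ℝ) * P c f (n - 1) t) t := by
  have h := hasDerivAt_Q hc hf hM n hn t
  have h1 : P c f n = Q c f n := funext (P_eq_Q hc hf hM n)
  rw [h1, P_eq_Q hc hf hM (n - 1) t]
  exact h

lemma hasDerivAt_P0 (hc : 0 < c) (hf : Continuous f) (hM : ∀ x, |f x| ≤ M) (t : ℝ) :
    HasDerivAt (P c f 0) (f t * Real.exp (c * t)) t := by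
  have h1 : P c f 0 = Gm c f 0 := by
    funext u; simp [P, Gm]
  rw [h1]
  simpa using hasDerivAt_Gm hc hf hM 0 t

lemma hasDerivAt_exp_neg (lam t : ℝ) :
    HasDerivAt (fun u : ℝ => Real.exp (-lam * u)) (Real.exp (-lam * t) * -lam) t := by
  have h1 : HasDerivAt (fun u : ℝ => -lam * u) (-lam) t := by
    simpa using (hasDerivAt_id t).const_mul (-lam)
  exact (Real.hasDerivAt_exp _).comp t h1

end LCTaux

open LCTaux in
/-- linear chain trick with exponentially discounted Erlang kernel:
for bounded continuous `f`, `β(a) = β₀ e^{-k_d a}`, and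
`L_n(t) = ∫₀^∞ f(t-a) β(a) g_b^n(a) da`, one has
`L₁' = β₀ b f(t) - (b + k_d) L₁` and `L_n' = b (L_{n-1} - L_n) - k_d L_n` for `n ≥ 2`. -/
theorem linear_chain_trick_discounted
    (b β₀ kd : ℝ) (hb : 0 < b) (hβ₀ : 0 < β₀) (hkd : 0 < kd)
    (g : ℕ → ℝ → ℝ)
    (hg : ∀ n s, g n s = b ^ n * s ^ (n - 1) * Real.exp (-b * s) / (Nat.factorial (n - 1) : ℝ))
    (β : ℝ → ℝ) (hβ : ∀ a, β a = β₀ * Real.exp (-kd * a))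
    (f : ℝ → ℝ) (hf_cont : Continuous f) (M : ℝ) (hf_bdd : ∀ x, |f x| ≤ M)
    (L : ℕ → ℝ → ℝ)
    (hL : ∀ n t, L n t = ∫ a in Ioi (0:ℝ), f (t - a) * β a * g n a) :
    (∀ t : ℝ, HasDerivAt (L 1) (β₀ * b * f t - (b + kd) * L 1 t) t) ∧
    (∀ n : ℕ, 2 ≤ n → ∀ t : ℝ,
      HasDerivAt (L n) (b * (L (n - 1) t - L n t) - kd * L n t) t) := by
  have hM0 : (0:ℝ) ≤ M := le_trans (abs_nonneg _) (hf_bdd 0)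
  set lam := b + kd with hlamdef
  have hlam : 0 < lam := by rw [hlamdef]; linarith
  have step1 : ∀ n : ℕ, 1 ≤ n → ∀ t : ℝ,
      L n t = (β₀ * b ^ n / ((n - 1).factorial : ℝ)) *
        (Real.exp (-lam * t) * P lam f (n - 1) t) := by
    intro n hn t
    have hK : ((n - 1).factorial : ℝ) ≠ 0 := Nat.cast_ne_zero.mpr (Nat.factorial_ne_zero _)
    have hpt : ∀ s : ℝ, f s * β (t - s) * g n (t - s)
        = (β₀ * b ^ n / ((n - 1).factorial : ℝ) * Real.exp (-lam * t)) *
            (f s * (t - s) ^ (n - 1) * Real.exp (lam * s)) := by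
      intro s
      rw [hβ, hg]
      have e1 : Real.exp (-(kd * (t - s))) * Real.exp (-(b * (t - s)))
          = Real.exp (-(lam * t)) * Real.exp (lam * s) := by
        rw [← Real.exp_add, ← Real.exp_add]
        congr 1
        rw [hlamdef]; ring
      simp only [neg_mul]
      linear_combination (f s * β₀ * b ^ n * (t - s) ^ (n - 1) / ((n - 1).factorial : ℝ)) * e1
    rw [hL]
    calc ∫ a in Ioi (0:ℝ), f (t - a) * β a * g n a
        = ∫ a, (Ioi (0:ℝ)).indicator (fun a => f (t - a) * β a * g n a) a :=
          (integral_indicator measurableSet_Ioi).symm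
      _ = ∫ a, (Iio t).indicator (fun s => f s * β (t - s) * g n (t - s)) (t - a) := by
          congr 1
          funext a
          by_cases ha : 0 < a
          · rw [indicator_of_mem (mem_Ioi.mpr ha),
              indicator_of_mem (by simp only [mem_Iio]; linarith)]
            simp [sub_sub_cancel]
          · rw [indicator_of_notMem (by simpa using ha),
              indicator_of_notMem (by simp only [mem_Iio]; push_neg; linarith)]
      _ = ∫ s, (Iio t).indicator (fun s => f s * β (t - s) * g n (t - s)) s :=
          integral_sub_left_eq_self _ volume t
      _ = ∫ s in Iio t, f s * β (t - s) * g n (t - s) :=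
          integral_indicator measurableSet_Iio
      _ = ∫ s in Iic t, f s * β (t - s) * g n (t - s) := integral_Iic_eq_integral_Iio.symm
      _ = ∫ s in Iic t, (β₀ * b ^ n / ((n - 1).factorial : ℝ) * Real.exp (-lam * t)) *
            (f s * (t - s) ^ (n - 1) * Real.exp (lam * s)) := by simp only [hpt]
      _ = (β₀ * b ^ n / ((n - 1).factorial : ℝ) * Real.exp (-lam * t)) *
            ∫ s in Iic t, f s * (t - s) ^ (n - 1) * Real.exp (lam * s) :=
          integral_const_mul _ _
      _ = (β₀ * b ^ n / ((n - 1).factorial : ℝ)) *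
            (Real.exp (-lam * t) * P lam f (n - 1) t) := by
          rw [mul_assoc]; rfl
  constructor
  · intro t
    have hrep : L 1 = fun u => (β₀ * b) *
        (Real.exp (-lam * u) * P lam f 0 u) := by
      funext u
      rw [step1 1 le_rfl u]
      norm_num
    have hder : HasDerivAt (fun u => (β₀ * b) * (Real.exp (-lam * u) * P lam f 0 u))
        ((β₀ * b) * ((Real.exp (-lam * t) * -lam) * P lam f 0 t +
          Real.exp (-lam * t) * (f t * Real.exp (lam * t)))) t :=
      ((hasDerivAt_exp_neg lam t).mul (hasDerivAt_P0 hlam hf_cont hf_bdd t)).const_mul _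
    rw [hrep]
    convert hder using 1
    have hee : Real.exp (-lam * t) * Real.exp (lam * t) = 1 := by
      rw [← Real.exp_add]; norm_num
    linear_combination (-(β₀ * b * f t)) * hee
  · intro n hn t
    obtain ⟨m, rfl⟩ : ∃ m, n = m + 2 := ⟨n - 2, by omega⟩
    have hrep2 : L (m + 2) = fun u => (β₀ * b ^ (m + 2) / ((m + 1).factorial : ℝ)) *
        (Real.exp (-lam * u) * P lam f (m + 1) u) := funext fun u => step1 (m + 2) (by omega) u
    have hrep1 : L (m + 1) = fun u => (β₀ * b ^ (m + 1) / ((m).factorial : ℝ)) *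
        (Real.exp (-lam * u) * P lam f m u) := funext fun u => step1 (m + 1) (by omega) u
    have hP : HasDerivAt (P lam f (m + 1)) (((m + 1 : ℕ) : ℝ) * P lam f m t) t :=
      hasDerivAt_P hlam hf_cont hf_bdd (m + 1) (by omega) t
    have hder : HasDerivAt (fun u => (β₀ * b ^ (m + 2) / ((m + 1).factorial : ℝ)) *
        (Real.exp (-lam * u) * P lam f (m + 1) u))
        ((β₀ * b ^ (m + 2) / ((m + 1).factorial : ℝ)) *
          ((Real.exp (-lam * t) * -lam) * P lam f (m + 1) t +
            Real.exp (-lam * t) * (((m + 1 : ℕ) : ℝ) * P lam f m t))) t :=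
      ((hasDerivAt_exp_neg lam t).mul hP).const_mul _
    have hidx : m + 2 - 1 = m + 1 := rfl
    rw [hidx, hrep2, hrep1]
    convert hder using 1
    have hfact : ((m + 1).factorial : ℝ) = ((m : ℝ) + 1) * (m.factorial : ℝ) := by
      rw [Nat.factorial_succ]; push_cast; ring
    have h1 : (m.factorial : ℝ) ≠ 0 := Nat.cast_ne_zero.mpr (Nat.factorial_ne_zero _)
    rw [hlamdef, hfact]
    have h2 : ((m : ℝ) + 1) ≠ 0 := by positivity
    field_simp
    push_cast
    ring
end
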